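/- Let N be a Tutte chain-group on V over a field F (a subspace of F^V), and let Ñ = {f↑ + g↓ : f ∈ N, g ∈ N^⊥} ⊆ (F²)^V, where f↑(v) = (f(v), 0) and g↓(v) = (0, g(v)). Then Ñ is a Lagrangian chain-group on V to K = F² with respect to the symmetric form b⁺((a,b),(c,d)) = ad + bc, i.e., Ñ is totally isotropic of dimension |V|. -/

import Mathlib

variable {F : Type*} [Field F] {V : Type*} [Fintype V] [DecidableEq V]

/-- The symmetric bilinear form `b⁺((a,b),(c,d)) = ad + bc` on `K = F²`. -/
def bplus : F × F → F × F → F := fun x y => x.1 * y.2 + x.2 * y.1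

/-- The orthogonal complement `N^⊥` of a Tutte chain-group `N ⊆ F^V` with
respect to the dot product. -/
def tutteOrth (N : Submodule F (V → F)) : Submodule F (V → F) where
  carrier := {g | ∀ f ∈ N, ∑ v, f v * g v = 0}
  add_mem' := by
    intro a b ha hb f hf
    simp only [Pi.add_apply, mul_add, Finset.sum_add_distrib, ha f hf,
      hb f hf, add_zero]
  zero_mem' := by
    intro f hf
    simp
  smul_mem' := by
    intro c a ha f hf
    simp only [Pi.smul_apply, smul_eq_mul, mul_left_comm, ← Finset.mul_sum,
      ha f hf, mul_zero]

/-- The interleaving map `(f, g) ↦ (v ↦ (f v, g v))` sending a pair of chains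
to `F²`-valued chains, i.e. `(f,g) ↦ f↑ + g↓`. -/
def interleave : ((V → F) × (V → F)) →ₗ[F] (V → F × F) where
  toFun p := fun v => (p.1 v, p.2 v)
  map_add' p q := rfl
  map_smul' c p := rfl

/-- The dot-product bilinear form on `V → F`. -/
noncomputable def dotForm : LinearMap.BilinForm F (V → F) :=
  LinearMap.mk₂ F (fun f g => ∑ v, f v * g v)
    (by intro f f' g; simp [add_mul, Finset.sum_add_distrib])
    (by intro c f g; simp [Finset.mul_sum, mul_assoc])
    (by intro f g g'; simp [mul_add, Finset.sum_add_distrib])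
    (by intro c f g; simp [Finset.mul_sum, mul_left_comm])

lemma dotForm_apply (f g : V → F) : dotForm f g = ∑ v, f v * g v := rfl

lemma dotForm_isRefl : (dotForm (F := F) (V := V)).IsRefl := by
  intro f g h
  simpa [dotForm_apply, mul_comm] using h

lemma dotForm_nondegenerate : (dotForm (F := F) (V := V)).Nondegenerate := by
  refine (LinearMap.IsRefl.nondegenerate_iff_separatingLeft
    (B := dotForm (F := F) (V := V)) (fun x y h => dotForm_isRefl x y h)).2 ?_
  intro f hf
  ext v
  have := hf (Pi.single v 1)
  simpa [dotForm_apply, Pi.single_apply, mul_comm] using this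

lemma tutteOrth_eq (N : Submodule F (V → F)) :
    tutteOrth N = dotForm.orthogonal N := rfl

omit [Fintype V] [DecidableEq V] in
lemma interleave_injective :
    Function.Injective (interleave (F := F) (V := V)) := by
  intro p q h
  have h1 : ∀ v, (p.1 v, p.2 v) = (q.1 v, q.2 v) := fun v => congrFun h v
  ext v
  · exact congrArg Prod.fst (h1 v)
  · exact congrArg Prod.snd (h1 v)

/-- A submodule product is equivalent to the product of submodules. -/
def prodEquivAux {M M' : Type*} [AddCommGroup M] [AddCommGroup M'] [Module F M] [Module F M']
    (p : Submodule F M) (q : Submodule F M') : (p.prod q) ≃ₗ[F] p × q where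
  toFun x := (⟨x.1.1, x.2.1⟩, ⟨x.1.2, x.2.2⟩)
  invFun x := ⟨(x.1.1, x.2.1), x.1.2, x.2.2⟩
  map_add' _ _ := rfl
  map_smul' _ _ := rfl
  left_inv _ := rfl
  right_inv _ := rfl

lemma finrank_prod_aux {M M' : Type*} [AddCommGroup M] [AddCommGroup M'] [Module F M]
    [Module F M'] [FiniteDimensional F M] [FiniteDimensional F M']
    (p : Submodule F M) (q : Submodule F M') :
    Module.finrank F (p.prod q) = Module.finrank F p + Module.finrank F q := by
  rw [(prodEquivAux p q).finrank_eq, Module.finrank_prod]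

/-- For a Tutte chain-group `N` on `V` to `F`, the chain-group
`Ñ = {f↑ + g↓ : f ∈ N, g ∈ N^⊥}` is a Lagrangian chain-group on `V` to
`K = F²` with respect to the symmetric form `b⁺`: it is totally isotropic of
dimension `|V|`. -/
theorem tutte_to_lagrangian (N : Submodule F (V → F)) :
    (∀ u ∈ (N.prod (tutteOrth N)).map interleave,
      ∀ w ∈ (N.prod (tutteOrth N)).map interleave,
        ∑ x, bplus (u x) (w x) = 0) ∧
    Module.finrank F ((N.prod (tutteOrth N)).map interleave)
      = Fintype.card V := by
  constructor
  · rintro u ⟨⟨f, g⟩, ⟨hf, hg⟩, rfl⟩ w ⟨⟨f', g'⟩, ⟨hf', hg'⟩, rfl⟩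
    have h1 : ∑ v, f v * g' v = 0 := hg' f hf
    have h2 : ∑ v, f' v * g v = 0 := hg f' hf'
    simp only [interleave, LinearMap.coe_mk, AddHom.coe_mk, bplus]
    rw [Finset.sum_add_distrib, h1]
    simpa [mul_comm] using h2
  · have hcard : Module.finrank F (V → F) = Fintype.card V :=
      Module.finrank_fintype_fun_eq_card F
    have horth : Module.finrank F (tutteOrth N)
        = Fintype.card V - Module.finrank F N := by
      rw [tutteOrth_eq, LinearMap.BilinForm.finrank_orthogonal dotForm_nondegenerate,
        hcard]
    rw [(Submodule.equivMapOfInjective interleave interleave_injective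
      (N.prod (tutteOrth N))).finrank_eq.symm, finrank_prod_aux, horth]
    have hle : Module.finrank F N ≤ Fintype.card V := hcard ▸ N.finrank_le
    omega
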